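/- (Moser–Jodeit one-dimensional lemma.) Let q ∈ (1, ∞) and q' = q/(q−1). Then A(q) = sup_φ ∫₀^∞ exp(φ(t)^{q'} − t) dt < ∞, where the supremum is taken over all nonnegative functions φ ∈ C¹[0, ∞) such that φ(0) = 0, φ' ≥ 0 on (0, ∞), and ∫₀^∞ (φ'(t))^q dt ≤ 1. -/

import Mathlib

open MeasureTheory Set Real
open scoped ENNReal
set_option maxHeartbeats 1000000

noncomputable def mjC (q : ℝ) : ℝ :=
  max 1 (q - 1) * (2 ^ (2 - (1 - 1/q)) / (1 - 1/q)) ^ q + 2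

lemma mjC_ge_two {q : ℝ} (hq : 1 < q) : 2 ≤ mjC q := by
  have h1 : (0:ℝ) < 1 - 1/q := by
    have : 1/q < 1 := by rw [div_lt_one (by linarith)]; linarith
    linarith
  have h2 : (0:ℝ) ≤ (2 ^ (2 - (1 - 1/q)) / (1 - 1/q) : ℝ) ^ q :=
    rpow_nonneg (by positivity) q
  have h3 : (0:ℝ) ≤ max 1 (q-1) := le_trans zero_le_one (le_max_left _ _)
  have := mul_nonneg h3 h2
  unfold mjC; linarith

lemma mj_tangent {α x y : ℝ} (hα0 : 0 < α) (hα1 : α ≤ 1) (hx : 0 ≤ x) (hxy : x ≤ y) :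
    α * (y - x) * y ^ (α - 1) ≤ y ^ α - x ^ α := by
  rcases eq_or_lt_of_le (hx.trans hxy) with hy | hy
  · have hy0 : y = 0 := hy.symm
    have hx0 : x = 0 := le_antisymm (hy0 ▸ hxy) hx
    simp [hx0, hy0]
  · have hs : (-1:ℝ) ≤ x / y - 1 := by
      have : 0 ≤ x / y := div_nonneg hx hy.le
      linarith
    have hbern := rpow_one_add_le_one_add_mul_self hs hα0.le hα1
    rw [add_sub_cancel] at hbern
    -- hbern : (x/y)^α ≤ 1 + α * (x/y - 1)
    have hdiv : (x / y) ^ α = x ^ α / y ^ α := div_rpow hx hy.le α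
    have hyα : (0:ℝ) < y ^ α := rpow_pos_of_pos hy α
    have hsub : y ^ (α - 1) = y ^ α / y := by
      rw [rpow_sub hy, rpow_one]
    rw [hdiv] at hbern
    rw [hsub]
    have h1 : x ^ α ≤ (1 + α * (x / y - 1)) * y ^ α := by
      rw [div_le_iff₀ hyα] at hbern; linarith
    have h2 : (1 + α * (x / y - 1)) * y ^ α = y ^ α + α * (x - y) / y * y ^ α := by
      field_simp
    rw [h2] at h1
    have h3 : α * (x - y) / y * y ^ α = -(α * (y - x) * (y ^ α / y)) := by
      field_simp; ring
    rw [h3] at h1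
    linarith

lemma mj_one_sub_rpow {p x : ℝ} (hp : 0 < p) (hx0 : 0 ≤ x) (hx1 : x ≤ 1) :
    1 - (1 - x) ^ p ≤ max 1 p * x := by
  rcases eq_or_lt_of_le hx1 with h1 | h1
  · subst h1
    simpa [Real.zero_rpow hp.ne'] using le_max_left (1:ℝ) p
  · rcases le_or_gt 1 p with hp1 | hp1
    · have hs : (-1:ℝ) ≤ -x := by linarith
      have := one_add_mul_self_le_rpow_one_add hs hp1
      have hmax : max 1 p = p := max_eq_right hp1
      rw [hmax]
      have h2 : (1:ℝ) + p * (-x) ≤ (1 + -x) ^ p := this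
      have h3 : (1:ℝ) - p * x ≤ (1 - x) ^ p := by
        have : (1:ℝ) + -x = 1 - x := by ring
        rw [this] at h2; linarith
      linarith
    · have hb0 : (0:ℝ) < 1 - x := by linarith
      have := rpow_le_rpow_of_exponent_ge hb0 (by linarith) hp1.le
      rw [rpow_one] at this
      have hmax : (1:ℝ) ≤ max 1 p := le_max_left _ _
      nlinarith

set_option maxHeartbeats 1000000 in
lemma mj_log {s : ℝ} (hs : 0 < s) (hs1 : s ≤ 1) : -Real.log s ≤ 2 * s ^ (-(1/2:ℝ)) := by
  have h1 : Real.log (s ^ (-(1/2:ℝ))) = (-(1/2:ℝ)) * Real.log s := Real.log_rpow hs _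
  have h2 : Real.log (s ^ (-(1/2:ℝ))) ≤ s ^ (-(1/2:ℝ)) - 1 :=
    Real.log_le_sub_one_of_pos (rpow_pos_of_pos hs _)
  have h3 : (0:ℝ) < s ^ (-(1/2:ℝ)) := rpow_pos_of_pos hs _
  linarith

lemma mj_E {q lam t u : ℝ} (hq : 1 < q) (hlam : 0 ≤ lam) (ht0 : 0 < t)
    (ht : mjC q * lam < t) (hu : 0 ≤ u)
    (hineq : (t + u - lam) ^ (1 - 1/q) ≤
      t ^ (1 - 1/q) + u ^ (1 - 1/q) * (max 1 (q-1) * lam / t) ^ (1/q)) :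
    u ≤ mjC q * lam := by
  have hmj2 : 2 ≤ mjC q := mjC_ge_two hq
  obtain ⟨α, hαdef⟩ : ∃ a : ℝ, a = 1 - 1/q := ⟨_, rfl⟩
  obtain ⟨β, hβdef⟩ : ∃ a : ℝ, a = 1/q := ⟨_, rfl⟩
  obtain ⟨c, hcdef⟩ : ∃ a : ℝ, a = max 1 (q-1) := ⟨_, rfl⟩
  obtain ⟨R, hRdef⟩ : ∃ a : ℝ, a = 2 ^ (2 - α) / α := ⟨_, rfl⟩
  rw [← hαdef, ← hβdef, ← hcdef] at hineq
  obtain ⟨m, hmdef⟩ : ∃ a : ℝ, a = mjC q := ⟨_, rfl⟩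
  have hmj : m = c * R ^ q + 2 := by
    rw [hmdef, hRdef, hcdef, hαdef]; rfl
  rw [← hmdef] at ht hmj2 ⊢
  have hq0 : (0:ℝ) < q := by linarith
  have hβ0 : 0 < β := by rw [hβdef]; positivity
  have hβ1 : β < 1 := by rw [hβdef, div_lt_one hq0]; exact hq
  have hα0 : 0 < α := by rw [hαdef]; rw [hβdef] at hβ1; linarith
  have hα1 : α < 1 := by rw [hαdef]; rw [hβdef] at hβ0; linarith
  have hαβ : α + β = 1 := by rw [hαdef, hβdef]; ring
  have hβq : β * q = 1 := by rw [hβdef]; field_simp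
  have hc1 : (1:ℝ) ≤ c := by rw [hcdef]; exact le_max_left _ _
  have hc0 : (0:ℝ) < c := by linarith
  have hR0 : (0:ℝ) < R := by rw [hRdef]; positivity
  have hRq0 : (0:ℝ) < R ^ q := rpow_pos_of_pos hR0 q
  have hmpos : 0 < m := by linarith
  have hpow2 : (2:ℝ) ^ (α - 1) * 2 ^ (2 - α) = 2 := by
    rw [← rpow_add two_pos]; norm_num
  have h2a0 : (0:ℝ) < (2:ℝ) ^ (α - 1) := rpow_pos_of_pos two_pos _
  have h2b0 : (0:ℝ) < (2:ℝ) ^ (2 - α) := rpow_pos_of_pos two_pos _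
  by_contra hcon
  push_neg at hcon
  have hu0 : 0 < u := lt_of_le_of_lt (mul_nonneg (by linarith) hlam) hcon
  have h2lam : 2 * lam ≤ u := by
    have := mul_le_mul_of_nonneg_right hmj2 hlam
    calc 2 * lam ≤ m * lam := this
      _ ≤ u := hcon.le
  have hulam : u / 2 ≤ u - lam := by linarith
  have hy0 : 0 < t + u - lam := by linarith
  have hmvt := mj_tangent hα0 hα1.le ht0.le (show t ≤ t + u - lam by linarith)
  rw [show t + u - lam - t = u - lam by ring] at hmvt
  have hkey : α * (u - lam) * (t + u - lam) ^ (α - 1) ≤ u ^ α * (c * lam / t) ^ β := by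
    linarith [hineq, hmvt]
  have htβ : (0:ℝ) < t ^ β := rpow_pos_of_pos ht0 β
  have hclam : (0:ℝ) ≤ c * lam := mul_nonneg hc0.le hlam
  have hdivβ : (c * lam / t) ^ β = (c * lam) ^ β / t ^ β := div_rpow hclam ht0.le β
  have huα0 : (0:ℝ) < u ^ α := rpow_pos_of_pos hu0 α
  rcases le_or_gt u t with hut | hut
  · -- case u ≤ t
    have hyle : t + u - lam ≤ 2 * t := by linarith
    have hanti : (2 * t) ^ (α - 1) ≤ (t + u - lam) ^ (α - 1) :=
      rpow_le_rpow_of_nonpos hy0 hyle (by linarith)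
    have h2t : (2 * t) ^ (α - 1) = 2 ^ (α - 1) * t ^ (α - 1) :=
      mul_rpow (by norm_num) ht0.le
    have htneg : t ^ (α - 1) = (t ^ β)⁻¹ := by
      rw [show α - 1 = -β by linarith, rpow_neg ht0.le]
    have hstep : α * (u / 2) * (2 ^ (α - 1) * (t ^ β)⁻¹) ≤ u ^ α * ((c * lam) ^ β / t ^ β) := by
      calc α * (u / 2) * (2 ^ (α - 1) * (t ^ β)⁻¹)
          = α * (u / 2) * (2 * t) ^ (α - 1) := by rw [h2t, htneg]
        _ ≤ α * (u - lam) * (t + u - lam) ^ (α - 1) := by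
            exact mul_le_mul (mul_le_mul_of_nonneg_left hulam hα0.le) hanti
              (le_of_lt (by rw [h2t, htneg]; positivity)) (mul_nonneg hα0.le (by linarith))
        _ ≤ u ^ α * (c * lam / t) ^ β := hkey
        _ = u ^ α * ((c * lam) ^ β / t ^ β) := by rw [hdivβ]
    have hstep2 : α * (u / 2) * 2 ^ (α - 1) ≤ u ^ α * (c * lam) ^ β := by
      have h := mul_le_mul_of_nonneg_right hstep htβ.le
      have e1 : α * (u / 2) * (2 ^ (α - 1) * (t ^ β)⁻¹) * t ^ β
          = α * (u / 2) * 2 ^ (α - 1) := by field_simp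
      have e2 : u ^ α * ((c * lam) ^ β / t ^ β) * t ^ β = u ^ α * (c * lam) ^ β := by
        field_simp
      rw [e1, e2] at h; exact h
    have huαβ : u ^ α * u ^ β = u := by
      rw [← rpow_add hu0, hαβ, rpow_one]
    have h6 : α * u ^ β / 2 * 2 ^ (α - 1) ≤ (c * lam) ^ β := by
      have h5' : u ^ α * (α * u ^ β / 2 * 2 ^ (α - 1)) ≤ u ^ α * ((c * lam) ^ β) := by
        calc u ^ α * (α * u ^ β / 2 * 2 ^ (α - 1)) = α * ((u ^ α * u ^ β) / 2) * 2 ^ (α - 1) := by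
              ring
          _ = α * (u / 2) * 2 ^ (α - 1) := by rw [huαβ]
          _ ≤ u ^ α * (c * lam) ^ β := hstep2
      exact le_of_mul_le_mul_left h5' huα0
    have hstep3 : u ^ β ≤ (c * lam) ^ β * R := by
      have h := mul_le_mul_of_nonneg_right h6 hR0.le
      have e : α * u ^ β / 2 * 2 ^ (α - 1) * R = u ^ β := by
        rw [hRdef]
        field_simp
        linear_combination hpow2
      rw [e] at h; exact h
    have hfin : u ≤ c * lam * R ^ q := by
      have h7 : u = (u ^ β) ^ q := by
        rw [← Real.rpow_mul hu0.le, hβq, rpow_one]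
      have h8 : ((c * lam) ^ β * R) ^ q = c * lam * R ^ q := by
        rw [mul_rpow (rpow_nonneg hclam β) hR0.le, ← Real.rpow_mul hclam, hβq, rpow_one]
      rw [h7, ← h8]
      exact rpow_le_rpow (rpow_nonneg hu0.le β) hstep3 hq0.le
    rcases eq_or_lt_of_le hlam with hl0 | hl0
    · rw [← hl0] at hfin; simp at hfin; linarith
    · have e2 : c * lam * R ^ q = m * lam - 2 * lam := by rw [hmj]; ring
      linarith [hfin, hcon, hl0]
  · -- case t < u
    have hyle : t + u - lam ≤ 2 * u := by linarith
    have hanti : (2 * u) ^ (α - 1) ≤ (t + u - lam) ^ (α - 1) :=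
      rpow_le_rpow_of_nonpos hy0 hyle (by linarith)
    have h2u : (2 * u) ^ (α - 1) = 2 ^ (α - 1) * u ^ (α - 1) :=
      mul_rpow (by norm_num) hu0.le
    have huu : u ^ (α - 1) * u = u ^ α := by
      nth_rewrite 2 [← rpow_one u]
      rw [← rpow_add hu0]
      norm_num
    have hXnn : (0:ℝ) ≤ (c * lam / t) ^ β := rpow_nonneg (by positivity) β
    have e0 : u ^ α * (α * 2 ^ (α - 1) / 2) = α * (u / 2) * (2 ^ (α - 1) * u ^ (α - 1)) := by
      rw [← huu]; ring
    have hstep : u ^ α * (α * 2 ^ (α - 1) / 2) ≤ u ^ α * ((c * lam / t) ^ β) := by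
      calc u ^ α * (α * 2 ^ (α - 1) / 2)
          = α * (u / 2) * (2 ^ (α - 1) * u ^ (α - 1)) := e0
        _ = α * (u / 2) * (2 * u) ^ (α - 1) := by rw [h2u]
        _ ≤ α * (u - lam) * (t + u - lam) ^ (α - 1) := by
            exact mul_le_mul (mul_le_mul_of_nonneg_left hulam hα0.le) hanti
              (le_of_lt (by rw [h2u]; positivity)) (mul_nonneg hα0.le (by linarith))
        _ ≤ u ^ α * (c * lam / t) ^ β := hkey
    have hstep2 : α * 2 ^ (α - 1) / 2 ≤ (c * lam / t) ^ β :=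
      le_of_mul_le_mul_left hstep huα0
    rcases eq_or_lt_of_le hlam with hl0 | hl0
    · rw [← hl0] at hstep2
      rw [mul_zero, zero_div, zero_rpow hβ0.ne'] at hstep2
      have := mul_pos hα0 h2a0
      linarith
    · have hlt : c * lam / t < c / m := by
        rw [div_lt_div_iff₀ ht0 hmpos]
        nlinarith
      have h9 : (c * lam / t) ^ β < (c / m) ^ β :=
        rpow_lt_rpow (by positivity) hlt hβ0
      have h10 : c / m ≤ (R ^ q)⁻¹ := by
        rw [div_le_iff₀ hmpos, hmj]
        have expand : (R ^ q)⁻¹ * (c * R ^ q + 2) = c + 2 * (R ^ q)⁻¹ := by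
          field_simp
        rw [expand]
        have : 0 < (R ^ q)⁻¹ := by positivity
        linarith
      have h11 : ((R ^ q)⁻¹ : ℝ) ^ β = R⁻¹ := by
        rw [inv_rpow (rpow_nonneg hR0.le q), ← Real.rpow_mul hR0.le]
        rw [show q * β = 1 by rw [mul_comm]; exact hβq, rpow_one]
      have h12 : (c / m) ^ β ≤ R⁻¹ := by
        rw [← h11]
        exact rpow_le_rpow (by positivity) h10 hβ0.le
      have h13 : R⁻¹ = α * 2 ^ (α - 1) / 2 := by
        rw [hRdef, inv_div]
        rw [div_eq_div_iff h2b0.ne' two_ne_zero]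
        linear_combination (-α) * hpow2
      linarith [hstep2, h9, h12, h13.symm.le]

section
variable {q q' : ℝ} {φ : ℝ → ℝ}

lemma mj_key (hq : 1 < q) (hq' : q' = q / (q - 1))
    (hφ : ContDiffOn ℝ 1 φ (Ici 0)) (hnn : ∀ t ∈ Ici (0:ℝ), 0 ≤ φ t) (h0 : φ 0 = 0)
    (hd : ∀ t ∈ Ioi (0:ℝ), 0 ≤ deriv φ t)
    (hbud : (∫⁻ t in Ioi (0:ℝ), ENNReal.ofReal (deriv φ t ^ q)) ≤ 1) :
    (∫⁻ t in Ioi (0:ℝ), ENNReal.ofReal (Real.exp (φ t ^ q' - t))) ≤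
      ENNReal.ofReal (16 * mjC q) := by
  have hq0 : (0:ℝ) < q := by linarith
  have hα0 : (0:ℝ) < 1 - 1/q := by
    have : 1/q < 1 := by rw [div_lt_one hq0]; exact hq
    linarith
  have hβ0 : (0:ℝ) < 1/q := by positivity
  have hq'0 : 0 < q' := by rw [hq']; exact div_pos (by linarith) (by linarith)
  have hqne : q ≠ 0 := by linarith
  have hq1ne : q - 1 ≠ 0 := by linarith
  have hq'α : q' * (1 - 1/q) = 1 := by rw [hq']; field_simp
  have hαq : (1 - 1/q) * q = q - 1 := by field_simp
  -- continuity of φ and its derivative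
  have hφc : ContinuousOn φ (Ici 0) := hφ.continuousOn
  have hgcont : ContinuousOn (derivWithin φ (Ici 0)) (Ici 0) :=
    hφ.continuousOn_derivWithin (uniqueDiffOn_Ici 0) le_rfl
  have hgd : ∀ x ∈ Ioi (0:ℝ), derivWithin φ (Ici 0) x = deriv φ x := fun x hx =>
    derivWithin_of_mem_nhds (Ici_mem_nhds hx)
  -- FTC
  have hftc : ∀ s t : ℝ, 0 ≤ s → s ≤ t → φ t - φ s = ∫ x in Ioc s t, deriv φ x := by
    intro s t hs hst
    have hIcc : Icc s t ⊆ Ici (0:ℝ) := fun x hx => le_trans hs hx.1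
    have h1 : ∫ x in s..t, derivWithin φ (Ici 0) x = φ t - φ s := by
      apply intervalIntegral.integral_eq_sub_of_hasDeriv_right_of_le hst (hφc.mono hIcc)
      · intro x hx
        have hx0 : 0 < x := lt_of_le_of_lt hs hx.1
        have hdiff : DifferentiableAt ℝ φ x :=
          ((hφ.differentiableOn one_ne_zero) x (le_of_lt hx0)).differentiableAt (Ici_mem_nhds hx0)
        have h2 := hdiff.hasDerivAt.hasDerivWithinAt (s := Ioi x)
        rwa [← hgd x hx0] at h2
      · exact ((hgcont.mono hIcc).intervalIntegrable_of_Icc hst)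
    rw [intervalIntegral.integral_of_le hst] at h1
    rw [← h1]
    apply setIntegral_congr_fun measurableSet_Ioc
    intro x hx
    exact hgd x (lt_of_le_of_lt hs hx.1)
  have hgint : ∀ s t : ℝ, 0 ≤ s → IntegrableOn (deriv φ) (Ioc s t) volume := by
    intro s t hs
    rcases le_or_gt s t with hst | hst
    · have hIcc : Icc s t ⊆ Ici (0:ℝ) := fun x hx => le_trans hs hx.1
      have h1 : IntegrableOn (derivWithin φ (Ici 0)) (Icc s t) volume :=
        (hgcont.mono hIcc).integrableOn_Icc
      exact (h1.mono_set Ioc_subset_Icc_self).congr_fun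
        (fun x hx => hgd x (lt_of_le_of_lt hs hx.1)) measurableSet_Ioc
    · rw [Ioc_eq_empty (not_lt.2 hst.le)]
      exact integrableOn_empty
  -- budget function
  have hJne : ∀ t : ℝ, (∫⁻ x in Ioc (0:ℝ) t, ENNReal.ofReal (deriv φ x ^ q)) ≠ ⊤ := by
    intro t
    exact ne_top_of_le_ne_top (by norm_num)
      (le_trans (lintegral_mono_set Ioc_subset_Ioi_self) hbud)
  set G : ℝ → ℝ := fun t => (∫⁻ x in Ioc (0:ℝ) t, ENNReal.ofReal (deriv φ x ^ q)).toReal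
    with hGdef
  have hJmono : ∀ s t : ℝ, s ≤ t →
      (∫⁻ x in Ioc (0:ℝ) s, ENNReal.ofReal (deriv φ x ^ q)) ≤
      (∫⁻ x in Ioc (0:ℝ) t, ENNReal.ofReal (deriv φ x ^ q)) := by
    intro s t hst
    exact lintegral_mono_set (Ioc_subset_Ioc le_rfl hst)
  have hGmono : ∀ s t : ℝ, s ≤ t → G s ≤ G t := by
    intro s t hst
    exact ENNReal.toReal_mono (hJne t) (hJmono s t hst)
  have hG0 : G 0 = 0 := by simp [hGdef]
  have hGnn : ∀ t, 0 ≤ G t := fun t => ENNReal.toReal_nonneg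
  have hG1 : ∀ t, G t ≤ 1 := by
    intro t
    have h1 : G t ≤ (1:ℝ≥0∞).toReal := ENNReal.toReal_mono (by norm_num)
      (le_trans (lintegral_mono_set Ioc_subset_Ioi_self) hbud)
    simpa using h1
  have hJdiff : ∀ s t : ℝ, 0 ≤ s → s ≤ t →
      (∫⁻ x in Ioc s t, ENNReal.ofReal (deriv φ x ^ q)) = ENNReal.ofReal (G t - G s) := by
    intro s t hs hst
    have hsplit : (∫⁻ x in Ioc (0:ℝ) t, ENNReal.ofReal (deriv φ x ^ q)) =
        (∫⁻ x in Ioc (0:ℝ) s, ENNReal.ofReal (deriv φ x ^ q)) +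
        (∫⁻ x in Ioc s t, ENNReal.ofReal (deriv φ x ^ q)) := by
      rw [← Ioc_union_Ioc_eq_Ioc hs hst]
      exact lintegral_union measurableSet_Ioc (Ioc_disjoint_Ioc_of_le le_rfl)
    have h2 : (∫⁻ x in Ioc s t, ENNReal.ofReal (deriv φ x ^ q)) =
        (∫⁻ x in Ioc (0:ℝ) t, ENNReal.ofReal (deriv φ x ^ q)) -
        (∫⁻ x in Ioc (0:ℝ) s, ENNReal.ofReal (deriv φ x ^ q)) := by
      rw [hsplit, ENNReal.add_sub_cancel_left (hJne s)]
    rw [h2, hGdef]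
    simp only []
    rw [← ENNReal.toReal_sub_of_le (hJmono s t hst) (hJne t)]
    rw [ENNReal.ofReal_toReal (ENNReal.sub_ne_top (hJne t))]
  -- Hölder step
  have hconj : Real.HolderConjugate q (q / (q-1)) := Real.HolderConjugate.conjExponent hq
  have hA : ∀ s t : ℝ, 0 ≤ s → s ≤ t →
      φ t - φ s ≤ (t - s) ^ (1 - 1/q) * (G t - G s) ^ (1/q) := by
    intro s t hs hst
    have hdnn : ∀ x ∈ Ioc s t, 0 ≤ deriv φ x := fun x hx => hd x (lt_of_le_of_lt hs hx.1)
    have h1 : ENNReal.ofReal (φ t - φ s) = ∫⁻ x in Ioc s t, ENNReal.ofReal (deriv φ x) := by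
      rw [hftc s t hs hst]
      exact ofReal_integral_eq_lintegral_ofReal (hgint s t hs)
        (ae_restrict_of_forall_mem measurableSet_Ioc hdnn)
    have hfmeas : AEMeasurable (fun x => ENNReal.ofReal (deriv φ x))
        (volume.restrict (Ioc s t)) := (measurable_deriv φ).ennreal_ofReal.aemeasurable
    have h2 := ENNReal.lintegral_mul_le_Lp_mul_Lq (volume.restrict (Ioc s t)) hconj
      hfmeas aemeasurable_const (g := fun _ => (1:ℝ≥0∞))
    simp only [Pi.mul_apply, mul_one, ENNReal.one_rpow, lintegral_const, one_mul] at h2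
    rw [Measure.restrict_apply MeasurableSet.univ, Set.univ_inter, Real.volume_Ioc] at h2
    have h3 : (∫⁻ x in Ioc s t, ENNReal.ofReal (deriv φ x) ^ q) =
        ENNReal.ofReal (G t - G s) := by
      rw [← hJdiff s t hs hst]
      apply setLIntegral_congr_fun measurableSet_Ioc
      intro x hx
      dsimp only
      rw [ENNReal.ofReal_rpow_of_nonneg (hdnn x hx) hq0.le]
    rw [h3] at h2
    have h4 : ENNReal.ofReal (φ t - φ s) ≤
        ENNReal.ofReal ((G t - G s) ^ (1/q) * (t - s) ^ (1 - 1/q)) := by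
      rw [h1]
      refine le_trans h2 ?_
      rw [ENNReal.ofReal_mul (rpow_nonneg (by linarith [hGmono s t hst] : (0:ℝ) ≤ G t - G s) _)]
      rw [ENNReal.ofReal_rpow_of_nonneg (by linarith [hGmono s t hst] : (0:ℝ) ≤ G t - G s) hβ0.le]
      rw [show (1:ℝ)/(q/(q-1)) = 1 - 1/q by field_simp]
      rw [ENNReal.ofReal_rpow_of_nonneg (by linarith : (0:ℝ) ≤ t - s) hα0.le]
    have hrhs : (0:ℝ) ≤ (G t - G s) ^ (1/q) * (t - s) ^ (1 - 1/q) :=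
      mul_nonneg (rpow_nonneg (by linarith [hGmono s t hst]) _)
        (rpow_nonneg (by linarith) _)
    rw [ENNReal.ofReal_le_ofReal_iff hrhs] at h4
    linarith [h4]
  -- basic pointwise bounds
  have hB : ∀ t : ℝ, 0 ≤ t → φ t ≤ t ^ (1 - 1/q) * G t ^ (1/q) := by
    intro t ht
    have := hA 0 t le_rfl ht
    rw [h0, hG0] at this
    simpa using this
  have hB' : ∀ t : ℝ, 0 ≤ t → φ t ≤ t ^ (1 - 1/q) := by
    intro t ht
    refine le_trans (hB t ht) ?_
    have h1 : G t ^ (1/q) ≤ 1 := rpow_le_one (hGnn t) (hG1 t) hβ0.le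
    calc t ^ (1 - 1/q) * G t ^ (1/q) ≤ t ^ (1 - 1/q) * 1 :=
          mul_le_mul_of_nonneg_left h1 (rpow_nonneg ht _)
      _ = t ^ (1 - 1/q) := mul_one _
  have hF : ∀ t : ℝ, 0 < t → φ t ^ q' ≤ t := by
    intro t ht
    have h1 : φ t ^ q' ≤ (t ^ (1 - 1/q)) ^ q' :=
      rpow_le_rpow (hnn t ht.le) (hB' t ht.le) hq'0.le
    refine le_trans h1 ?_
    rw [← Real.rpow_mul ht.le]
    rw [show (1 - 1/q) * q' = 1 by rw [mul_comm]; exact hq'α, rpow_one]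
  -- budget-spent estimate and two-point gap bound
  have hkey : ∀ (lam : ℝ), 0 ≤ lam → ∀ a b : ℝ, 0 < a → a ≤ b →
      mjC q * lam < a → a - lam < φ a ^ q' → b - lam < φ b ^ q' →
      b - a ≤ mjC q * lam := by
    intro lam hlam a b ha0 hab hKa hEa hEb
    have hmj2 : (2:ℝ) ≤ mjC q := mjC_ge_two hq
    have hlam_a : lam < a := by nlinarith
    have hb0 : 0 < b := lt_of_lt_of_le ha0 hab
    -- step 1 : (x - lam)^α ≤ φ x for x ∈ {a, b}
    have hstep1 : ∀ x : ℝ, 0 < x → lam ≤ x → x - lam < φ x ^ q' → (x - lam) ^ (1 - 1/q) ≤ φ x := by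
      intro x hx0 hlx hEx
      have h1 : (x - lam) ^ (1 - 1/q) ≤ (φ x ^ q') ^ (1 - 1/q) :=
        rpow_le_rpow (by linarith) hEx.le hα0.le
      rwa [← Real.rpow_mul (hnn x hx0.le), hq'α, rpow_one] at h1
    -- step 2 : budget spent before a
    have hstep2 : 1 - G a ≤ max 1 (q-1) * lam / a := by
      have h1 : (a - lam) ^ (1 - 1/q) ≤ a ^ (1 - 1/q) * G a ^ (1/q) :=
        le_trans (hstep1 a ha0 hlam_a.le hEa) (hB a ha0.le)
      have h2 : ((a - lam) ^ (1 - 1/q)) ^ q ≤ (a ^ (1 - 1/q) * G a ^ (1/q)) ^ q :=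
        rpow_le_rpow (rpow_nonneg (by linarith) _) h1 hq0.le
      rw [← Real.rpow_mul (by linarith : (0:ℝ) ≤ a - lam), hαq] at h2
      rw [mul_rpow (rpow_nonneg ha0.le _) (rpow_nonneg (hGnn a) _)] at h2
      rw [← Real.rpow_mul ha0.le, hαq] at h2
      rw [← Real.rpow_mul (hGnn a), one_div_mul_cancel hqne, rpow_one] at h2
      -- h2 : (a - lam) ^ (q-1) ≤ a ^ (q-1) * G a
      have haq : (0:ℝ) < a ^ (q-1) := rpow_pos_of_pos ha0 _
      have h3 : (1 - lam / a) ^ (q-1) ≤ G a := by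
        have e : (1 - lam / a) = (a - lam) / a := by field_simp
        rw [e, div_rpow (by linarith) ha0.le, div_le_iff₀ haq]
        linarith [h2]
      have h4 := mj_one_sub_rpow (show (0:ℝ) < q - 1 by linarith)
        (show (0:ℝ) ≤ lam / a by positivity)
        (show lam / a ≤ 1 by rw [div_le_one ha0]; linarith)
      rw [mul_div_assoc]
      linarith [h3, h4]
    -- step 3 : assemble the inequality required by mj_E
    have hGba : G b - G a ≤ max 1 (q-1) * lam / a := by
      have := hG1 b
      have := hGmono a b hab
      linarith [hstep2, hGmono 0 a ha0.le]
    have hineq : (a + (b - a) - lam) ^ (1 - 1/q) ≤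
        a ^ (1 - 1/q) + (b - a) ^ (1 - 1/q) * (max 1 (q-1) * lam / a) ^ (1/q) := by
      have h1 : (b - lam) ^ (1 - 1/q) ≤ φ b := hstep1 b hb0 (by linarith) hEb
      have h2 : φ b - φ a ≤ (b - a) ^ (1 - 1/q) * (G b - G a) ^ (1/q) := hA a b ha0.le hab
      have h3 : φ a ≤ a ^ (1 - 1/q) := hB' a ha0.le
      have h4 : (G b - G a) ^ (1/q) ≤ (max 1 (q-1) * lam / a) ^ (1/q) :=
        rpow_le_rpow (by linarith [hGmono a b hab]) hGba hβ0.le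
      have h5 : (b - a) ^ (1 - 1/q) * (G b - G a) ^ (1/q) ≤
          (b - a) ^ (1 - 1/q) * (max 1 (q-1) * lam / a) ^ (1/q) :=
        mul_le_mul_of_nonneg_left h4 (rpow_nonneg (by linarith) _)
      have e : a + (b - a) - lam = b - lam := by ring
      rw [e]
      linarith [h1, h2, h3, h5]
    exact mj_E hq hlam ha0 hKa (by linarith) hineq
  -- measure bound for the exceptional sets
  have hEbound : ∀ lam : ℝ, 0 ≤ lam →
      volume {x : ℝ | x ∈ Ioi (0:ℝ) ∧ x - lam < φ x ^ q'} ≤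
        ENNReal.ofReal (2 * mjC q * lam) := by
    intro lam hlam
    have hmj2 : (2:ℝ) ≤ mjC q := mjC_ge_two hq
    have hKnn : 0 ≤ mjC q * lam := mul_nonneg (by linarith) hlam
    set S := {x : ℝ | x ∈ Ioi (0:ℝ) ∧ x - lam < φ x ^ q'} with hSdef
    set T := S ∩ Ioi (mjC q * lam) with hTdef
    have hsub : S ⊆ Ioc 0 (mjC q * lam) ∪ T := by
      intro x hx
      rcases le_or_gt x (mjC q * lam) with h | h
      · exact Or.inl ⟨hx.1, h⟩
      · exact Or.inr ⟨hx, h⟩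
    have hvolT : volume T ≤ ENNReal.ofReal (mjC q * lam) := by
      rcases eq_empty_or_nonempty T with hT | hT
      · rw [hT]; simp
      · have hbdd : BddBelow T := ⟨mjC q * lam, fun x hx => le_of_lt hx.2⟩
        set i := sInf T with hidef
        have hTsub : T ⊆ Icc i (i + mjC q * lam) := by
          intro b hb
          refine ⟨csInf_le hbdd hb, ?_⟩
          refine le_of_forall_pos_le_add ?_
          intro ε hε
          have h1 : sInf T < i + ε := by rw [← hidef]; linarith [hidef]
          obtain ⟨a, haT, ha⟩ := (csInf_lt_iff hbdd hT).1 h1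
          rcases le_or_gt a b with hab | hab
          · have h2 := hkey lam hlam a b haT.1.1 hab haT.2 haT.1.2 hb.1.2
            linarith [h2, ha]
          · have : i ≤ a := csInf_le hbdd haT
            linarith
        calc volume T ≤ volume (Icc i (i + mjC q * lam)) := measure_mono hTsub
          _ = ENNReal.ofReal (i + mjC q * lam - i) := Real.volume_Icc
          _ = ENNReal.ofReal (mjC q * lam) := by ring_nf
    calc volume S ≤ volume (Ioc 0 (mjC q * lam) ∪ T) := measure_mono hsub
      _ ≤ volume (Ioc 0 (mjC q * lam)) + volume T := measure_union_le _ _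
      _ ≤ ENNReal.ofReal (mjC q * lam) + ENNReal.ofReal (mjC q * lam) := by
          rw [Real.volume_Ioc]
          exact add_le_add (by simp) hvolT
      _ = ENNReal.ofReal (2 * mjC q * lam) := by
          rw [← ENNReal.ofReal_add hKnn hKnn]; ring_nf
  -- layer cake
  have hrpc : Continuous fun x : ℝ => x ^ q' := by
    rw [continuous_iff_continuousAt]
    intro x
    exact Real.continuousAt_rpow_const x q' (Or.inr hq'0.le)
  have hφae : AEMeasurable φ (volume.restrict (Ioi (0:ℝ))) :=
    (hφc.mono (Ioi_subset_Ici le_rfl)).aemeasurable measurableSet_Ioi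
  have hmint : AEMeasurable (fun t => Real.exp (φ t ^ q' - t)) (volume.restrict (Ioi (0:ℝ))) :=
    Real.continuous_exp.measurable.comp_aemeasurable
      ((hrpc.measurable.comp_aemeasurable hφae).sub aemeasurable_id)
  have hlayer := lintegral_eq_lintegral_meas_lt (volume.restrict (Ioi (0:ℝ)))
    (ae_of_all _ fun t => (Real.exp_pos (φ t ^ q' - t)).le) hmint
  have hii : IntegrableOn (fun s : ℝ => (4 * mjC q) * s ^ (-(1/2:ℝ))) (Ioc 0 1) volume :=
    ((intervalIntegral.intervalIntegrable_rpow' (by norm_num)).1).const_mul _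
  have hiinn : 0 ≤ᵐ[volume.restrict (Ioc (0:ℝ) 1)] fun s : ℝ => (4 * mjC q) * s ^ (-(1/2:ℝ)) := by
    apply ae_restrict_of_forall_mem measurableSet_Ioc
    intro x hx
    have hmj2 : (2:ℝ) ≤ mjC q := mjC_ge_two hq
    exact mul_nonneg (by linarith) (rpow_nonneg hx.1.le _)
  have hval : ∫ s in Ioc (0:ℝ) 1, (4 * mjC q) * s ^ (-(1/2:ℝ)) = 8 * mjC q := by
    rw [← intervalIntegral.integral_of_le zero_le_one]
    rw [intervalIntegral.integral_const_mul]
    rw [integral_rpow (Or.inl (by norm_num))]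
    rw [one_rpow, zero_rpow (by norm_num)]
    ring
  have hfinal : (∫⁻ t in Ioi (0:ℝ), ENNReal.ofReal (Real.exp (φ t ^ q' - t))) ≤
      ENNReal.ofReal (16 * mjC q) := by
    rw [hlayer]
    calc (∫⁻ s in Ioi (0:ℝ), (volume.restrict (Ioi 0)) {a : ℝ | s < Real.exp (φ a ^ q' - a)})
        ≤ ∫⁻ s in Ioi (0:ℝ),
            (Ioc (0:ℝ) 1).indicator (fun s => ENNReal.ofReal ((4 * mjC q) * s ^ (-(1/2:ℝ)))) s := by
          apply lintegral_mono_ae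
          filter_upwards [ae_restrict_mem measurableSet_Ioi] with s hs
          rcases le_or_gt s 1 with hs1 | hs1
          · have hmem : s ∈ Ioc (0:ℝ) 1 := ⟨hs, hs1⟩
            rw [indicator_of_mem hmem]
            rw [Measure.restrict_apply' measurableSet_Ioi]
            have hlog : 0 ≤ -Real.log s := by
              have := Real.log_nonpos (le_of_lt hs) hs1
              linarith
            have hsub2 : {a : ℝ | s < Real.exp (φ a ^ q' - a)} ∩ Ioi 0 ⊆
                {x : ℝ | x ∈ Ioi (0:ℝ) ∧ x - (-Real.log s) < φ x ^ q'} := by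
              rintro a ⟨haexp, hapos⟩
              refine ⟨hapos, ?_⟩
              have h2 := Real.log_lt_log hs haexp
              rw [Real.log_exp] at h2
              linarith
            refine le_trans (measure_mono hsub2) ?_
            refine le_trans (hEbound (-Real.log s) hlog) ?_
            apply ENNReal.ofReal_le_ofReal
            have h3 : -Real.log s ≤ 2 * s ^ (-(1/2:ℝ)) := mj_log hs hs1
            have hmj2 : (2:ℝ) ≤ mjC q := mjC_ge_two hq
            calc 2 * mjC q * (-Real.log s) ≤ 2 * mjC q * (2 * s ^ (-(1/2:ℝ))) :=
                  mul_le_mul_of_nonneg_left h3 (by linarith)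
              _ = 4 * mjC q * s ^ (-(1/2:ℝ)) := by ring
          · rw [indicator_of_notMem (fun hmem => absurd hmem.2 (not_le.2 hs1))]
            rw [Measure.restrict_apply' measurableSet_Ioi]
            have hempty : {a : ℝ | s < Real.exp (φ a ^ q' - a)} ∩ Ioi 0 = ∅ := by
              apply eq_empty_iff_forall_notMem.2
              rintro a ⟨haexp, hapos⟩
              have h2 : Real.exp (φ a ^ q' - a) ≤ 1 :=
                Real.exp_le_one_iff.2 (by linarith [hF a hapos])
              simp only [mem_setOf_eq] at haexp
              linarith
            rw [hempty]
            simp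
      _ = ∫⁻ s in Ioc (0:ℝ) 1, ENNReal.ofReal ((4 * mjC q) * s ^ (-(1/2:ℝ))) := by
          rw [lintegral_indicator measurableSet_Ioc,
            Measure.restrict_restrict measurableSet_Ioc,
            inter_eq_self_of_subset_left Ioc_subset_Ioi_self]
      _ = ENNReal.ofReal (∫ s in Ioc (0:ℝ) 1, (4 * mjC q) * s ^ (-(1/2:ℝ))) :=
          (ofReal_integral_eq_lintegral_ofReal hii hiinn).symm
      _ ≤ ENNReal.ofReal (16 * mjC q) := by
          rw [hval]
          apply ENNReal.ofReal_le_ofReal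
          have hmj2 : (2:ℝ) ≤ mjC q := mjC_ge_two hq
          linarith
  exact hfinal

end

/-- **Moser–Jodeit one-dimensional lemma.** For `q ∈ (1,∞)` and
`q' = q/(q−1)`, the supremum
`A(q) = sup_φ ∫₀^∞ exp(φ(t)^{q'} − t) dt` over all nonnegative `φ ∈ C¹[0,∞)` with
`φ(0) = 0`, `φ' ≥ 0` on `(0,∞)` and `∫₀^∞ (φ'(t))^q dt ≤ 1` is finite. -/
theorem moser_jodeit_one_dimensional (q q' : ℝ) (hq : 1 < q) (hq' : q' = q / (q - 1)) :
    (⨆ φ ∈ {φ : ℝ → ℝ |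
        ContDiffOn ℝ 1 φ (Ici (0 : ℝ)) ∧
        (∀ t ∈ Ici (0 : ℝ), 0 ≤ φ t) ∧
        φ 0 = 0 ∧
        (∀ t ∈ Ioi (0 : ℝ), 0 ≤ deriv φ t) ∧
        (∫⁻ t in Ioi (0 : ℝ), ENNReal.ofReal (deriv φ t ^ q)) ≤ 1},
      ∫⁻ t in Ioi (0 : ℝ), ENNReal.ofReal (Real.exp (φ t ^ q' - t))) < ⊤ := by
  have hlt : (ENNReal.ofReal (16 * mjC q)) < ⊤ := ENNReal.ofReal_lt_top
  refine lt_of_le_of_lt (iSup₂_le fun φ hφ => ?_) hlt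
  obtain ⟨h1, h2, h3, h4, h5⟩ := hφ
  exact mj_key hq hq' h1 h2 h3 h4 h5
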